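/- Let μ and ν be probability measures on a measurable space Θ, let ε ≥ 0, and suppose both μ(O) ≤ e^ε · ν(O) and ν(O) ≤ e^ε · μ(O) for every measurable set O ⊆ Θ. Then for every measurable function f : Θ → ℝ with 0 ≤ f(θ) ≤ b for all θ (where b ≥ 0), one has |∫ f dμ − ∫ f dν| ≤ b·(e^ε − 1). -/
import Mathlib


open MeasureTheory Real

lemma dp_one_side_gap {Θ : Type*} [MeasurableSpace Θ]
    (μ ν : Measure Θ) [IsProbabilityMeasure μ] [IsProbabilityMeasure ν]
    (ε : ℝ) (hε : 0 ≤ ε)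
    (hdp : ∀ O : Set Θ, MeasurableSet O → μ O ≤ ENNReal.ofReal (exp ε) * ν O)
    (b : ℝ) (hb : 0 ≤ b) (f : Θ → ℝ) (hf : Measurable f)
    (hf0 : ∀ θ, 0 ≤ f θ) (hfb : ∀ θ, f θ ≤ b) :
    ∫ θ, f θ ∂μ - ∫ θ, f θ ∂ν ≤ b * (exp ε - 1) := by
  have hint : ∀ (κ : Measure Θ) [IsProbabilityMeasure κ], Integrable f κ := by
    intro κ _
    refine Integrable.mono' (integrable_const b) hf.aestronglyMeasurable ?_
    exact .of_forall fun θ => by rw [Real.norm_eq_abs, abs_of_nonneg (hf0 θ)]; exact hfb θ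
  have heq : ∀ (κ : Measure Θ) [IsProbabilityMeasure κ],
      ∫ θ, f θ ∂κ = (∫⁻ θ, ENNReal.ofReal (f θ) ∂κ).toReal := fun κ _ =>
    integral_eq_lintegral_of_nonneg_ae (.of_forall hf0) hf.aestronglyMeasurable
  have hμle : μ ≤ ENNReal.ofReal (exp ε) • ν := by
    refine Measure.le_iff.2 fun s hs => ?_
    simpa using hdp s hs
  have hbound : ∀ (κ : Measure Θ) [IsProbabilityMeasure κ],
      ∫⁻ θ, ENNReal.ofReal (f θ) ∂κ ≤ ENNReal.ofReal b := by
    intro κ _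
    calc ∫⁻ θ, ENNReal.ofReal (f θ) ∂κ ≤ ∫⁻ _, ENNReal.ofReal b ∂κ :=
          lintegral_mono fun θ => ENNReal.ofReal_le_ofReal (hfb θ)
      _ = ENNReal.ofReal b := by simp
  have hνfin : ∫⁻ θ, ENNReal.ofReal (f θ) ∂ν ≠ ⊤ :=
    ne_top_of_le_ne_top ENNReal.ofReal_ne_top (hbound ν)
  have hlin : ∫⁻ θ, ENNReal.ofReal (f θ) ∂μ ≤
      ENNReal.ofReal (exp ε) * ∫⁻ θ, ENNReal.ofReal (f θ) ∂ν := by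
    calc ∫⁻ θ, ENNReal.ofReal (f θ) ∂μ
        ≤ ∫⁻ θ, ENNReal.ofReal (f θ) ∂(ENNReal.ofReal (exp ε) • ν) :=
          lintegral_mono' hμle le_rfl
      _ = ENNReal.ofReal (exp ε) * ∫⁻ θ, ENNReal.ofReal (f θ) ∂ν :=
          lintegral_smul_measure _ _
  have hμν : ∫ θ, f θ ∂μ ≤ exp ε * ∫ θ, f θ ∂ν := by
    rw [heq μ, heq ν]
    calc (∫⁻ θ, ENNReal.ofReal (f θ) ∂μ).toReal
        ≤ (ENNReal.ofReal (exp ε) * ∫⁻ θ, ENNReal.ofReal (f θ) ∂ν).toReal := by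
          refine ENNReal.toReal_mono ?_ hlin
          exact ENNReal.mul_ne_top ENNReal.ofReal_ne_top hνfin
      _ = exp ε * (∫⁻ θ, ENNReal.ofReal (f θ) ∂ν).toReal := by
          rw [ENNReal.toReal_mul, ENNReal.toReal_ofReal (exp_nonneg ε)]
  have hνb : ∫ θ, f θ ∂ν ≤ b := by
    calc ∫ θ, f θ ∂ν ≤ ∫ _, b ∂ν := integral_mono (hint ν) (integrable_const b) hfb
      _ = b := by simp
  have hν0 : 0 ≤ ∫ θ, f θ ∂ν := integral_nonneg hf0
  have hε1 : 1 ≤ exp ε := one_le_exp hε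
  nlinarith [hμν, hνb, hν0, hε1]

/-- If `μ(O) ≤ e^ε · ν(O)` and `ν(O) ≤ e^ε · μ(O)` for every measurable
`O` (two-sided ε-differential privacy between the two output distributions), then for
any measurable `f` with `0 ≤ f ≤ b`, `|∫ f dμ − ∫ f dν| ≤ b · (e^ε − 1)`. -/
theorem two_sided_dp_implies_expectation_gap {Θ : Type*} [MeasurableSpace Θ]
    (μ ν : Measure Θ) [IsProbabilityMeasure μ] [IsProbabilityMeasure ν]
    (ε : ℝ) (hε : 0 ≤ ε)
    (hdp₁ : ∀ O : Set Θ, MeasurableSet O → μ O ≤ ENNReal.ofReal (exp ε) * ν O)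
    (hdp₂ : ∀ O : Set Θ, MeasurableSet O → ν O ≤ ENNReal.ofReal (exp ε) * μ O)
    (b : ℝ) (hb : 0 ≤ b) (f : Θ → ℝ) (hf : Measurable f)
    (hf0 : ∀ θ, 0 ≤ f θ) (hfb : ∀ θ, f θ ≤ b) :
    |∫ θ, f θ ∂μ - ∫ θ, f θ ∂ν| ≤ b * (exp ε - 1) := by
  rw [abs_sub_le_iff]
  exact ⟨dp_one_side_gap μ ν ε hε hdp₁ b hb f hf hf0 hfb,
         dp_one_side_gap ν μ ε hε hdp₂ b hb f hf hf0 hfb⟩
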